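/- Let v₁, v₂ : ℝ → ℝ be differentiable functions satisfying v₁'(t) = v₂(t) and v₂'(t) = −v₁(t) for all t ∈ ℝ, and let r₁, r₂, r₃, r₄, r₅, r₆ ∈ ℝ. Define u : ℝ → ℝ by u(t) = r₁ v₁(t) + r₂ v₂(t) + r₃ v₁(t)³ + r₄ v₂(t)³ + r₅ v₁(t)² v₂(t) + r₆ v₁(t) v₂(t)². Then u is four times differentiable and u⁗(t) + 10 u″(t) + 9 u(t) = 0 for all t ∈ ℝ. -/

import Mathlib

/-- The span of `{v₁, v₂, v₁³, v₂³, v₁²v₂, v₁v₂²}` is invariant under differentiation. -/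
lemma lorenz_aux (v₁ v₂ : ℝ → ℝ)
    (hv₁ : ∀ t, HasDerivAt v₁ (v₂ t) t)
    (hv₂ : ∀ t, HasDerivAt v₂ (-v₁ t) t)
    (c₁ c₂ c₃ c₄ c₅ c₆ d₁ d₂ d₃ d₄ d₅ d₆ : ℝ)
    (h₁ : d₁ = -c₂) (h₂ : d₂ = c₁) (h₃ : d₃ = -c₅) (h₄ : d₄ = c₆)
    (h₅ : d₅ = 3 * c₃ - 2 * c₆) (h₆ : d₆ = 2 * c₅ - 3 * c₄) (t : ℝ) :
    HasDerivAt (fun t => c₁ * v₁ t + c₂ * v₂ t + c₃ * v₁ t ^ 3 + c₄ * v₂ t ^ 3 +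
        c₅ * v₁ t ^ 2 * v₂ t + c₆ * v₁ t * v₂ t ^ 2)
      (d₁ * v₁ t + d₂ * v₂ t + d₃ * v₁ t ^ 3 + d₄ * v₂ t ^ 3 +
        d₅ * v₁ t ^ 2 * v₂ t + d₆ * v₁ t * v₂ t ^ 2) t := by
  rw [h₁, h₂, h₃, h₄, h₅, h₆]
  have A := hv₁ t
  have B := hv₂ t
  have H := (((((A.const_mul c₁).add (B.const_mul c₂)).add ((A.pow 3).const_mul c₃)).add
    ((B.pow 3).const_mul c₄)).add (((A.pow 2).const_mul c₅).mul B)).add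
    ((A.const_mul c₆).mul (B.pow 2))
  refine H.congr_deriv ?_
  simp only [Pi.pow_apply, Nat.cast_ofNat, show (3:ℕ) - 1 = 2 from rfl, show (2:ℕ) - 1 = 1 from rfl]
  ring


/-- **The steady-state input of the Lorenz example satisfies `u⁗ + 10u″ + 9u = 0`
(equation (Ui3)).**
If `v₁' = v₂` and `v₂' = −v₁`, then
`u = r₁v₁ + r₂v₂ + r₃v₁³ + r₄v₂³ + r₅v₁²v₂ + r₆v₁v₂²` is four times differentiable and
satisfies `u⁗(t) + 10u″(t) + 9u(t) = 0` for all `t`. -/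
theorem lorenz_steady_state_ode
    (v₁ v₂ : ℝ → ℝ)
    (hv₁ : ∀ t, HasDerivAt v₁ (v₂ t) t)
    (hv₂ : ∀ t, HasDerivAt v₂ (-v₁ t) t)
    (r₁ r₂ r₃ r₄ r₅ r₆ : ℝ)
    (u : ℝ → ℝ)
    (hu : u = fun t => r₁ * v₁ t + r₂ * v₂ t + r₃ * v₁ t ^ 3 + r₄ * v₂ t ^ 3 +
      r₅ * v₁ t ^ 2 * v₂ t + r₆ * v₁ t * v₂ t ^ 2) :
    (∀ k < 4, Differentiable ℝ (iteratedDeriv k u)) ∧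
      ∀ t : ℝ, iteratedDeriv 4 u t + 10 * iteratedDeriv 2 u t + 9 * u t = 0 := by
  have h0 : ∀ t, HasDerivAt u
      ((-r₂) * v₁ t + r₁ * v₂ t + (-r₅) * v₁ t ^ 3 + r₆ * v₂ t ^ 3 +
        (3 * r₃ - 2 * r₆) * v₁ t ^ 2 * v₂ t + (2 * r₅ - 3 * r₄) * v₁ t * v₂ t ^ 2) t := by
    rw [hu]
    exact lorenz_aux v₁ v₂ hv₁ hv₂ r₁ r₂ r₃ r₄ r₅ r₆ _ _ _ _ _ _
      rfl rfl rfl rfl rfl rfl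
  have h1 : ∀ t, HasDerivAt (fun t => (-r₂) * v₁ t + r₁ * v₂ t + (-r₅) * v₁ t ^ 3 +
        r₆ * v₂ t ^ 3 + (3 * r₃ - 2 * r₆) * v₁ t ^ 2 * v₂ t +
        (2 * r₅ - 3 * r₄) * v₁ t * v₂ t ^ 2)
      ((-r₁) * v₁ t + (-r₂) * v₂ t + (-3 * r₃ + 2 * r₆) * v₁ t ^ 3 +
        (-3 * r₄ + 2 * r₅) * v₂ t ^ 3 + (6 * r₄ - 7 * r₅) * v₁ t ^ 2 * v₂ t +
        (6 * r₃ - 7 * r₆) * v₁ t * v₂ t ^ 2) t := fun t =>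
    lorenz_aux v₁ v₂ hv₁ hv₂ _ _ _ _ _ _ _ _ _ _ _ _
      (by ring) (by ring) (by ring) (by ring) (by ring) (by ring) t
  have h2 : ∀ t, HasDerivAt (fun t => (-r₁) * v₁ t + (-r₂) * v₂ t +
        (-3 * r₃ + 2 * r₆) * v₁ t ^ 3 + (-3 * r₄ + 2 * r₅) * v₂ t ^ 3 +
        (6 * r₄ - 7 * r₅) * v₁ t ^ 2 * v₂ t + (6 * r₃ - 7 * r₆) * v₁ t * v₂ t ^ 2)
      (r₂ * v₁ t + (-r₁) * v₂ t + (-6 * r₄ + 7 * r₅) * v₁ t ^ 3 +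
        (6 * r₃ - 7 * r₆) * v₂ t ^ 3 + (-21 * r₃ + 20 * r₆) * v₁ t ^ 2 * v₂ t +
        (21 * r₄ - 20 * r₅) * v₁ t * v₂ t ^ 2) t := fun t =>
    lorenz_aux v₁ v₂ hv₁ hv₂ _ _ _ _ _ _ _ _ _ _ _ _
      (by ring) (by ring) (by ring) (by ring) (by ring) (by ring) t
  have h3 : ∀ t, HasDerivAt (fun t => r₂ * v₁ t + (-r₁) * v₂ t +
        (-6 * r₄ + 7 * r₅) * v₁ t ^ 3 + (6 * r₃ - 7 * r₆) * v₂ t ^ 3 +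
        (-21 * r₃ + 20 * r₆) * v₁ t ^ 2 * v₂ t + (21 * r₄ - 20 * r₅) * v₁ t * v₂ t ^ 2)
      (r₁ * v₁ t + r₂ * v₂ t + (21 * r₃ - 20 * r₆) * v₁ t ^ 3 +
        (21 * r₄ - 20 * r₅) * v₂ t ^ 3 + (-60 * r₄ + 61 * r₅) * v₁ t ^ 2 * v₂ t +
        (-60 * r₃ + 61 * r₆) * v₁ t * v₂ t ^ 2) t := fun t =>
    lorenz_aux v₁ v₂ hv₁ hv₂ _ _ _ _ _ _ _ _ _ _ _ _
      (by ring) (by ring) (by ring) (by ring) (by ring) (by ring) t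
  have i1 : iteratedDeriv 1 u = fun t => (-r₂) * v₁ t + r₁ * v₂ t + (-r₅) * v₁ t ^ 3 +
      r₆ * v₂ t ^ 3 + (3 * r₃ - 2 * r₆) * v₁ t ^ 2 * v₂ t +
      (2 * r₅ - 3 * r₄) * v₁ t * v₂ t ^ 2 := by
    rw [iteratedDeriv_one]
    exact funext fun t => (h0 t).deriv
  have i2 : iteratedDeriv 2 u = fun t => (-r₁) * v₁ t + (-r₂) * v₂ t +
      (-3 * r₃ + 2 * r₆) * v₁ t ^ 3 + (-3 * r₄ + 2 * r₅) * v₂ t ^ 3 +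
      (6 * r₄ - 7 * r₅) * v₁ t ^ 2 * v₂ t + (6 * r₃ - 7 * r₆) * v₁ t * v₂ t ^ 2 := by
    rw [show iteratedDeriv 2 u = deriv (iteratedDeriv 1 u) from iteratedDeriv_succ, i1]
    exact funext fun t => (h1 t).deriv
  have i3 : iteratedDeriv 3 u = fun t => r₂ * v₁ t + (-r₁) * v₂ t +
      (-6 * r₄ + 7 * r₅) * v₁ t ^ 3 + (6 * r₃ - 7 * r₆) * v₂ t ^ 3 +
      (-21 * r₃ + 20 * r₆) * v₁ t ^ 2 * v₂ t + (21 * r₄ - 20 * r₅) * v₁ t * v₂ t ^ 2 := by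
    rw [show iteratedDeriv 3 u = deriv (iteratedDeriv 2 u) from iteratedDeriv_succ, i2]
    exact funext fun t => (h2 t).deriv
  have i4 : iteratedDeriv 4 u = fun t => r₁ * v₁ t + r₂ * v₂ t +
      (21 * r₃ - 20 * r₆) * v₁ t ^ 3 + (21 * r₄ - 20 * r₅) * v₂ t ^ 3 +
      (-60 * r₄ + 61 * r₅) * v₁ t ^ 2 * v₂ t + (-60 * r₃ + 61 * r₆) * v₁ t * v₂ t ^ 2 := by
    rw [show iteratedDeriv 4 u = deriv (iteratedDeriv 3 u) from iteratedDeriv_succ, i3]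
    exact funext fun t => (h3 t).deriv
  constructor
  · intro k hk
    interval_cases k
    · rw [iteratedDeriv_zero]
      exact fun t => (h0 t).differentiableAt
    · rw [i1]
      exact fun t => (h1 t).differentiableAt
    · rw [i2]
      exact fun t => (h2 t).differentiableAt
    · rw [i3]
      exact fun t => (h3 t).differentiableAt
  · intro t
    rw [i4, i2, hu]
    ring
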